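/- arXiv:1009.5168 — 3 statements merged into one kernel-verified Lean document; each statement's English description precedes it below -/
import Mathlib

section
/- Let C and C' be two k-clusterings (partitions into k labeled parts) of a finite set S of size n. If dist(C, C') = d, where dist is the fraction of misclassified points under the optimal bijection between clusters, then the F-measure satisfies F(C, C') ≥ 1 - 3d/2. -/
/-- Harmonic mean of precision and recall for matching cluster `A` to cluster `B`. -/
noncomputable def pr {S : Type*} [DecidableEq S] (A B : Finset S) : ℝ :=
  2 * ((A ∩ B).card : ℝ) / ((A.card : ℝ) + (B.card : ℝ))

lemma pr_key {S : Type*} [DecidableEq S] (A B : Finset S) :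
    ((A ∩ B).card : ℝ) - ((B \ A).card : ℝ) / 2 ≤ (A.card : ℝ) * pr A B := by
  have h1 : (A ∩ B).card + (A \ B).card = A.card := Finset.card_inter_add_card_sdiff A B
  have h2 : (B ∩ A).card + (B \ A).card = B.card := Finset.card_inter_add_card_sdiff B A
  have hBA : (B ∩ A).card = (A ∩ B).card := by rw [Finset.inter_comm]
  rw [hBA] at h2
  have h1' : ((A ∩ B).card : ℝ) + ((A \ B).card : ℝ) = (A.card : ℝ) := by exact_mod_cast h1
  have h2' : ((A ∩ B).card : ℝ) + ((B \ A).card : ℝ) = (B.card : ℝ) := by exact_mod_cast h2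
  set m : ℝ := ((A ∩ B).card : ℝ) with hm
  set e : ℝ := ((A \ B).card : ℝ) with he
  set f : ℝ := ((B \ A).card : ℝ) with hf
  have hm0 : 0 ≤ m := by positivity
  have he0 : 0 ≤ e := by positivity
  have hf0 : 0 ≤ f := by positivity
  unfold pr
  rw [← hm, ← h1', ← h2']
  rcases eq_or_lt_of_le (by linarith : (0:ℝ) ≤ (m + e) + (m + f)) with h | h
  · have hm' : m = 0 := by linarith
    have hf' : f = 0 := by linarith
    rw [hm', hf']
    norm_num
  · rw [mul_div_assoc', le_div_iff₀ h]
    nlinarith [mul_nonneg hm0 he0, mul_nonneg he0 hf0, mul_nonneg hf0 hf0]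

lemma sum_card_partition {S : Type*} [Fintype S] [DecidableEq S] {k : ℕ}
    (C : Fin k → Finset S) (hC : ∀ x : S, ∃! i, x ∈ C i) :
    ∑ i, (C i).card = Fintype.card S := by
  classical
  calc ∑ i, (C i).card = ∑ i, ∑ x : S, if x ∈ C i then 1 else 0 := by
        refine Finset.sum_congr rfl fun i _ => ?_
        rw [← Finset.card_filter]
        congr 1
        ext x
        simp
    _ = ∑ x : S, ∑ i, if x ∈ C i then 1 else 0 := Finset.sum_comm
    _ = ∑ x : S, 1 := by
        refine Finset.sum_congr rfl fun x _ => ?_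
        rw [← Finset.card_filter]
        obtain ⟨i, hi, hu⟩ := hC x
        rw [Finset.card_eq_one]
        exact ⟨i, by ext j; simp only [Finset.mem_filter, Finset.mem_univ, true_and,
          Finset.mem_singleton]; exact ⟨fun h => hu j h, fun h => h ▸ hi⟩⟩
    _ = Fintype.card S := by simp

/-- If two `k`-clusterings of an `n`-point set are at distance `d` (fraction of
misclassified points under the optimal bijection of clusters), then the F-measure
satisfies `F(C, C') ≥ 1 - 3d/2`. -/
theorem f_measure_ge {S : Type*} [Fintype S] [DecidableEq S] (k : ℕ) (hk : 0 < k)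
    (C C' : Fin k → Finset S)
    (hC : ∀ x : S, ∃! i, x ∈ C i) (hC' : ∀ x : S, ∃! i, x ∈ C' i)
    (n : ℕ) (hn : Fintype.card S = n) (hnpos : 0 < n)
    (d : ℝ)
    (hdist : ∃ σ : Equiv.Perm (Fin k),
      (1 / (n : ℝ)) * ∑ i, ((C i \ C' (σ i)).card : ℝ) = d ∧
      ∀ τ : Equiv.Perm (Fin k),
        d ≤ (1 / (n : ℝ)) * ∑ i, ((C i \ C' (τ i)).card : ℝ)) :
    (1 / (n : ℝ)) * ∑ i, ((C i).card : ℝ) *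
        (Finset.univ.sup' (@Finset.univ_nonempty (Fin k) _ (Fin.pos_iff_nonempty.mp hk)) fun j => pr (C i) (C' j))
      ≥ 1 - 3 * d / 2 := by
  obtain ⟨σ, hd1, -⟩ := hdist
  have hN : (0:ℝ) < (n:ℝ) := by exact_mod_cast hnpos
  set E : ℝ := ∑ i, ((C i \ C' (σ i)).card : ℝ) with hE
  have hsumA : ∑ i, ((C i).card : ℝ) = (n:ℝ) := by
    have := sum_card_partition C hC
    rw [hn] at this
    exact_mod_cast this
  have hsumB : ∑ i, ((C' (σ i)).card : ℝ) = (n:ℝ) := by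
    have h0 := sum_card_partition C' hC'
    rw [hn] at h0
    have h1 : ∑ i, ((C' (σ i)).card : ℝ) = ∑ i, ((C' i).card : ℝ) :=
      Equiv.sum_comp σ (fun j => ((C' j).card : ℝ))
    rw [h1]
    exact_mod_cast h0
  have hM : ∑ i, ((C i ∩ C' (σ i)).card : ℝ) = (n:ℝ) - E := by
    have : ∀ i ∈ Finset.univ, ((C i ∩ C' (σ i)).card : ℝ)
        = ((C i).card : ℝ) - ((C i \ C' (σ i)).card : ℝ) := by
      intro i _
      have := Finset.card_inter_add_card_sdiff (C i) (C' (σ i))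
      have : ((C i ∩ C' (σ i)).card : ℝ) + ((C i \ C' (σ i)).card : ℝ) = ((C i).card : ℝ) := by
        exact_mod_cast this
      linarith
    rw [Finset.sum_congr rfl this, Finset.sum_sub_distrib, hsumA, hE]
  have hF : ∑ i, ((C' (σ i) \ C i).card : ℝ) = E := by
    have : ∀ i ∈ Finset.univ, ((C' (σ i) \ C i).card : ℝ)
        = ((C' (σ i)).card : ℝ) - ((C i ∩ C' (σ i)).card : ℝ) := by
      intro i _
      have h := Finset.card_inter_add_card_sdiff (C' (σ i)) (C i)
      rw [Finset.inter_comm] at h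
      have : ((C i ∩ C' (σ i)).card : ℝ) + ((C' (σ i) \ C i).card : ℝ)
          = ((C' (σ i)).card : ℝ) := by exact_mod_cast h
      linarith
    rw [Finset.sum_congr rfl this, Finset.sum_sub_distrib, hsumB, hM]
    ring
  have key : (n:ℝ) - 3 / 2 * E ≤ ∑ i, ((C i).card : ℝ) *
      (Finset.univ.sup' (@Finset.univ_nonempty (Fin k) _ (Fin.pos_iff_nonempty.mp hk))
        fun j => pr (C i) (C' j)) := by
    have step1 : ∑ i, (((C i ∩ C' (σ i)).card : ℝ) - ((C' (σ i) \ C i).card : ℝ) / 2)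
        ≤ ∑ i, ((C i).card : ℝ) * pr (C i) (C' (σ i)) :=
      Finset.sum_le_sum fun i _ => pr_key (C i) (C' (σ i))
    have step2 : ∑ i, ((C i).card : ℝ) * pr (C i) (C' (σ i))
        ≤ ∑ i, ((C i).card : ℝ) *
          (Finset.univ.sup' (@Finset.univ_nonempty (Fin k) _ (Fin.pos_iff_nonempty.mp hk))
            fun j => pr (C i) (C' j)) := by
      refine Finset.sum_le_sum fun i _ => ?_
      refine mul_le_mul_of_nonneg_left ?_ (by positivity)
      exact Finset.le_sup' (fun j => pr (C i) (C' j)) (Finset.mem_univ (σ i))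
    have heq : ∑ i, (((C i ∩ C' (σ i)).card : ℝ) - ((C' (σ i) \ C i).card : ℝ) / 2)
        = (n:ℝ) - 3 / 2 * E := by
      rw [Finset.sum_sub_distrib, hM, ← Finset.sum_div, hF]
      ring
    linarith
  rw [← hd1, ge_iff_le]
  have hrw : 1 - 3 * (1 / (n:ℝ) * E) / 2 = (1 / (n:ℝ)) * ((n:ℝ) - 3 / 2 * E) := by
    field_simp
  rw [hrw]
  exact mul_le_mul_of_nonneg_left key (by positivity)
end

section
/- Let (M,d) be a metric space, d_crit > 0, and X_1, …, X_k nonempty finite subsets of a finite set S ⊆ M such that (a) each X_i has diameter < 2·d_crit, (b) points in distinct X_i, X_j are at distance > 16·d_crit, and (c) |X_i| ≥ 2b for each i, where b ≥ |S \ (X_1 ∪ … ∪ X_k)|. Suppose L ⊆ S has the property that for each i there is a landmark within distance 2·d_crit of some point of X_i. Then any collection of closed balls of common radius r < 4·d_crit around landmarks in L, each ball containing more than b points of S, with the balls covering at least |S| - b points of S, induces a graph (vertices = balls, edges = overlapping balls) whose connected components each contain points from exactly one X_i, and distinct components correspond to distinct X_i when the graph has exactly k components. -/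
open Metric

/-- The graph on a finite set `Λ` of landmarks where two distinct landmarks are
adjacent iff their closed balls of radius `r` overlap (on a point of `S`). -/
def ballGraph {M : Type*} [MetricSpace M] (S : Finset M) (Λ : Finset M) (r : ℝ) :
    SimpleGraph {l // l ∈ Λ} :=
  SimpleGraph.fromRel fun l₁ l₂ =>
    ∃ s ∈ S, s ∈ closedBall (l₁ : M) r ∧ s ∈ closedBall (l₂ : M) r

open Classical in
/-- Correctness of Expand-Landmarks: with well-separated good sets of diameter
`< 2 d_crit` and size at least `2b`, at most `b` bad points, and balls of radius
`r < 4 d_crit` around landmarks, each ball containing more than `b` points of `S` and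
the balls covering all but at most `b` points of `S`, every connected component of the
ball-overlap graph contains points from exactly one good set, and when there are
exactly `k` components, distinct components correspond to distinct good sets. -/
theorem expand_landmarks_components {M : Type*} [MetricSpace M] [DecidableEq M]
    (d_crit : ℝ) (hd : 0 < d_crit)
    (S : Finset M) (k b : ℕ) (X : Fin k → Finset M)
    (hXS : ∀ i, X i ⊆ S) (hXne : ∀ i, (X i).Nonempty)
    (hdiam : ∀ i, ∀ x ∈ X i, ∀ y ∈ X i, dist x y < 2 * d_crit)
    (hsep : ∀ i j, i ≠ j → ∀ x ∈ X i, ∀ y ∈ X j, dist x y > 16 * d_crit)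
    (hsize : ∀ i, 2 * b ≤ (X i).card)
    (hbad : (S \ Finset.univ.biUnion X).card ≤ b)
    (L : Set M) (hland : ∀ i, ∃ l ∈ L, ∃ x ∈ X i, dist l x < 2 * d_crit)
    (r : ℝ) (hrpos : 0 ≤ r) (hr : r < 4 * d_crit)
    (Λ : Finset M) (hΛL : (Λ : Set M) ⊆ L)
    (hballs : ∀ l ∈ Λ, b < (S.filter fun s => s ∈ closedBall l r).card)
    (hcover : (S.card : ℤ) - b ≤
      ((S.filter fun s => ∃ l ∈ Λ, s ∈ closedBall l r).card : ℤ)) :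
    (∀ comp : (ballGraph S Λ r).ConnectedComponent,
      ∃! i : Fin k, ∃ l : {l // l ∈ Λ},
        (ballGraph S Λ r).connectedComponentMk l = comp ∧
        ∃ x ∈ X i, x ∈ closedBall (l : M) r) ∧
    (Nat.card (ballGraph S Λ r).ConnectedComponent = k →
      ∀ comp₁ comp₂ : (ballGraph S Λ r).ConnectedComponent, ∀ i : Fin k,
        (∃ l : {l // l ∈ Λ}, (ballGraph S Λ r).connectedComponentMk l = comp₁ ∧
          ∃ x ∈ X i, x ∈ closedBall (l : M) r) →
        (∃ l : {l // l ∈ Λ}, (ballGraph S Λ r).connectedComponentMk l = comp₂ ∧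
          ∃ x ∈ X i, x ∈ closedBall (l : M) r) →
        comp₁ = comp₂) := by
  classical
  have hbpos : ∀ i, b < (X i).card := by
    intro i
    rcases Nat.eq_zero_or_pos b with h0 | h1
    · have := (hXne i).card_pos; omega
    · have := hsize i; omega
  -- A: each ball meets some good set
  have hA : ∀ l : {l // l ∈ Λ}, ∃ i : Fin k, ∃ x ∈ X i, x ∈ closedBall (l : M) r := by
    intro l
    by_contra h
    push_neg at h
    have hsub : (S.filter fun s => s ∈ closedBall (l : M) r) ⊆ S \ Finset.univ.biUnion X := by
      intro s hs
      simp only [Finset.mem_filter] at hs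
      refine Finset.mem_sdiff.mpr ⟨hs.1, ?_⟩
      intro hmem
      rcases Finset.mem_biUnion.mp hmem with ⟨i, -, hi⟩
      exact h i s hi hs.2
    have h1 := Finset.card_le_card hsub
    have h2 := hballs l l.2
    omega
  -- B: unique index per ball
  have hB : ∀ (l : M), ∀ i j : Fin k, ∀ x ∈ X i, ∀ y ∈ X j,
      x ∈ closedBall l r → y ∈ closedBall l r → i = j := by
    intro l i j x hx y hy hxl hyl
    by_contra hij
    have hs := hsep i j hij x hx y hy
    rw [mem_closedBall] at hxl hyl
    have hd1 : dist x y ≤ dist x l + dist l y := dist_triangle _ _ _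
    have hd2 : dist l y = dist y l := dist_comm _ _
    linarith
  let f : {l // l ∈ Λ} → Fin k := fun l => (hA l).choose
  have hf : ∀ l, ∃ x ∈ X (f l), x ∈ closedBall (l : M) r := fun l => (hA l).choose_spec
  -- adjacency preserves f
  have hadj : ∀ l₁ l₂, (ballGraph S Λ r).Adj l₁ l₂ → f l₁ = f l₂ := by
    intro l₁ l₂ h
    rw [ballGraph, SimpleGraph.fromRel_adj] at h
    obtain ⟨-, h⟩ := h
    obtain ⟨s, hs, h1, h2⟩ : ∃ s ∈ S, s ∈ closedBall (l₁ : M) r ∧ s ∈ closedBall (l₂ : M) r := by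
      rcases h with ⟨s, hs, h1, h2⟩ | ⟨s, hs, h1, h2⟩
      exacts [⟨s, hs, h1, h2⟩, ⟨s, hs, h2, h1⟩]
    obtain ⟨x, hx, hxl⟩ := hf l₁
    obtain ⟨y, hy, hyl⟩ := hf l₂
    by_contra hne
    have hsep' := hsep _ _ hne x hx y hy
    rw [mem_closedBall] at hxl hyl h1 h2
    have t1 : dist x y ≤ dist x (l₁ : M) + dist (l₁ : M) s + dist s y :=
      dist_triangle4 _ _ _ _
    have t2 : dist s y ≤ dist s (l₂ : M) + dist (l₂ : M) y := dist_triangle _ _ _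
    have c1 : dist (l₁ : M) s = dist s (l₁ : M) := dist_comm _ _
    have c2 : dist (l₂ : M) y = dist y (l₂ : M) := dist_comm _ _
    linarith
  have hreach : ∀ l₁ l₂, (ballGraph S Λ r).Reachable l₁ l₂ → f l₁ = f l₂ := by
    intro l₁ l₂ h
    obtain ⟨w⟩ := h
    induction w with
    | nil => rfl
    | cons h p ih => exact (hadj _ _ h).trans ih
  -- index of a ball containing a point of X i is forced
  have hforce : ∀ (l : {l // l ∈ Λ}) (i : Fin k), (∃ x ∈ X i, x ∈ closedBall (l : M) r) →
      f l = i := by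
    rintro l i ⟨x, hx, hxl⟩
    obtain ⟨y, hy, hyl⟩ := hf l
    exact hB (l : M) (f l) i y hy x hx hyl hxl
  constructor
  · intro comp
    obtain ⟨l, hl⟩ := Quot.exists_rep comp
    obtain ⟨x, hx, hxl⟩ := hf l
    refine ⟨f l, ⟨l, hl, x, hx, hxl⟩, ?_⟩
    rintro i ⟨l', hl', hx'⟩
    have h1 : f l' = f l :=
      hreach _ _ ((SimpleGraph.ConnectedComponent.eq).mp (hl'.trans hl.symm))
    exact (hforce l' i hx').symm.trans h1
  · intro hcard comp₁ comp₂ i h₁ h₂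
    obtain ⟨l₁, hl₁, hx₁⟩ := h₁
    obtain ⟨l₂, hl₂, hx₂⟩ := h₂
    -- the component index map
    let fc : (ballGraph S Λ r).ConnectedComponent → Fin k :=
      SimpleGraph.ConnectedComponent.lift f (fun v w p _ => hreach v w ⟨p⟩)
    have hfc : ∀ l : {l // l ∈ Λ}, fc ((ballGraph S Λ r).connectedComponentMk l) = f l :=
      fun l => rfl
    -- surjectivity: every good set is hit by some ball
    have hE : ∀ j : Fin k, ∃ l ∈ Λ, ∃ x ∈ X j, x ∈ closedBall l r := by
      intro j
      by_contra h
      push_neg at h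
      have hsub : X j ⊆ S.filter fun s => ¬ ∃ l ∈ Λ, s ∈ closedBall l r := by
        intro x hx
        refine Finset.mem_filter.mpr ⟨hXS j hx, ?_⟩
        rintro ⟨l, hl, hxl⟩
        exact h l hl x hx hxl
      have h1 : (S.filter fun s => ∃ l ∈ Λ, s ∈ closedBall l r).card
          + (S.filter fun s => ¬ ∃ l ∈ Λ, s ∈ closedBall l r).card = S.card :=
        Finset.card_filter_add_card_filter_not _
      have h2 := Finset.card_le_card hsub
      have h3 := hbpos j
      omega
    have hsurj : Function.Surjective fc := by
      intro j
      obtain ⟨l, hl, hx⟩ := hE j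
      exact ⟨(ballGraph S Λ r).connectedComponentMk ⟨l, hl⟩, (hfc _).trans (hforce ⟨l, hl⟩ j hx)⟩
    have hfin : Finite (ballGraph S Λ r).ConnectedComponent := Quot.finite _
    have e : (ballGraph S Λ r).ConnectedComponent ≃ Fin k := Finite.equivFinOfCardEq hcard
    have hinj : Function.Injective fc :=
      (Finite.injective_iff_surjective_of_equiv e).mpr hsurj
    apply hinj
    have e1 : fc comp₁ = i := by rw [← hl₁, hfc]; exact hforce l₁ i hx₁
    have e2 : fc comp₂ = i := by rw [← hl₂, hfc]; exact hforce l₂ i hx₂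
    rw [e1, e2]
end

section
/- Let S be a finite set of size n and suppose the number of 'bad' points in S is at most b. If L ⊆ S contains k distinct good points chosen so that when each good point y was selected, at least n - 2b + 1 points s ∈ S satisfied min_{l ∈ L_before} d(l, s) ≤ min_{l ∈ L_before} d(l, y), and each good set X_i has |X_i| ≥ 2b, then either the k good points lie in k distinct good sets, or there is a landmark within distance 2·d_crit of some point in each good set. -/
/-- If `k` distinct good points are selected as landmarks so that each selected good
point was among the `2b` farthest points from the previously chosen landmarks, and each
good set has at least `2b` points, then either the `k` selected good points lie in `k`
distinct good sets, or there is a landmark within `2 * d_crit` of some point in each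
good set. -/
theorem landmark_selection_covers {M : Type*} [MetricSpace M] [DecidableEq M]
    (d_crit : ℝ) (hd : 0 < d_crit)
    (S : Finset M) (n : ℕ) (hn : S.card = n)
    (k b : ℕ) (X : Fin k → Finset M)
    (hXS : ∀ i, X i ⊆ S)
    (hdiam : ∀ i, ∀ x ∈ X i, ∀ y ∈ X i, dist x y < 2 * d_crit)
    (hsize : ∀ i, 2 * b ≤ (X i).card)
    (hbad : (S \ Finset.univ.biUnion X).card ≤ b)
    (T : ℕ) (ℓ : Fin T → M) (hℓS : ∀ t, ℓ t ∈ S)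
    (J : Finset (Fin T)) (hJcard : J.card = k)
    (hgood : ∀ j ∈ J, ∃ i, ℓ j ∈ X i)
    (hdistinct : ∀ j₁ ∈ J, ∀ j₂ ∈ J, ℓ j₁ = ℓ j₂ → j₁ = j₂)
    (hselect : ∀ j ∈ J, ∀ hne : (Finset.univ.filter fun t => t < j).Nonempty,
      (n : ℤ) - 2 * b + 1 ≤
        ((S.filter fun s =>
            ((Finset.univ.filter fun t => t < j).inf' hne fun t => dist (ℓ t) s) ≤
            ((Finset.univ.filter fun t => t < j).inf' hne fun t => dist (ℓ t) (ℓ j))).card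
          : ℤ)) :
    (∀ j₁ ∈ J, ∀ j₂ ∈ J, ∀ i, ℓ j₁ ∈ X i → ℓ j₂ ∈ X i → j₁ = j₂) ∨
    (∀ i : Fin k, ∃ t : Fin T, ∃ x ∈ X i, dist (ℓ t) x < 2 * d_crit) := by
  by_cases hsep : ∀ j₁ ∈ J, ∀ j₂ ∈ J, ∀ i, ℓ j₁ ∈ X i → ℓ j₂ ∈ X i → j₁ = j₂
  · exact Or.inl hsep
  right
  push_neg at hsep
  obtain ⟨j₁, hj₁, j₂, hj₂, i, hx₁, hx₂, hne⟩ := hsep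
  have key : ∀ (a c : Fin T), a ∈ J → c ∈ J → ℓ a ∈ X i → ℓ c ∈ X i → a < c →
      ∀ i' : Fin k, ∃ t, ∃ x ∈ X i', dist (ℓ t) x < 2 * d_crit := by
    intro a c ha hc hxa hxc hac i'
    have hne' : (Finset.univ.filter fun t : Fin T => t < c).Nonempty :=
      ⟨a, by simp [hac]⟩
    have hsel := hselect c hc hne'
    set F := Finset.univ.filter fun t : Fin T => t < c with hF
    have hdist : dist (ℓ a) (ℓ c) < 2 * d_crit := hdiam i _ hxa _ hxc
    have hinf : (F.inf' hne' fun t => dist (ℓ t) (ℓ c)) < 2 * d_crit :=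
      lt_of_le_of_lt (Finset.inf'_le _ (by simp [hF, hac])) hdist
    set A := S.filter fun s =>
      (F.inf' hne' fun t => dist (ℓ t) s) ≤ F.inf' hne' fun t => dist (ℓ t) (ℓ c) with hA
    have hAS : A ⊆ S := Finset.filter_subset _ _
    have hmeet : ((X i') ∩ A).Nonempty := by
      by_contra h
      rw [Finset.not_nonempty_iff_eq_empty] at h
      have hsub : X i' ⊆ S \ A := by
        intro x hx
        rw [Finset.mem_sdiff]
        refine ⟨hXS i' hx, fun hxA => ?_⟩
        exact Finset.notMem_empty x (h ▸ Finset.mem_inter.mpr ⟨hx, hxA⟩)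
      have h1 : (X i').card ≤ (S \ A).card := Finset.card_le_card hsub
      have h2 : (S \ A).card = S.card - A.card := Finset.card_sdiff_of_subset hAS
      have h3 := hsize i'
      have h4 : A.card ≤ S.card := Finset.card_le_card hAS
      rw [h2, hn] at h1
      rw [hn] at h4
      omega
    obtain ⟨x, hx⟩ := hmeet
    rw [Finset.mem_inter] at hx
    have hxA := hx.2
    rw [hA, Finset.mem_filter] at hxA
    have hlt : (F.inf' hne' fun t => dist (ℓ t) x) < 2 * d_crit :=
      lt_of_le_of_lt hxA.2 hinf
    obtain ⟨t, htF, htd⟩ := Finset.exists_mem_eq_inf' hne' (fun t => dist (ℓ t) x)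
    refine ⟨t, x, hx.1, ?_⟩
    rw [htd] at hlt
    exact hlt
  rcases lt_or_gt_of_ne hne with h | h
  · exact key j₁ j₂ hj₁ hj₂ hx₁ hx₂ h
  · exact key j₂ j₁ hj₂ hj₁ hx₂ hx₁ h
end
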